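/- The function x ↦ (B(x) − A(x))/x^5 is strictly monotone increasing on the interval (0,1]. -/

import Mathlib

set_option maxHeartbeats 4000000

open Real

/-- The series `B(x) = ∑ ((1/(2n-1))·(1/4ⁿ)·C(2n,n))²·xⁿ`. -/
noncomputable def Bfun (x : ℝ) : ℝ :=
  ∑' n : ℕ, ((1 / (2 * (n : ℝ) - 1)) * (1 / 4 ^ n) * (Nat.choose (2 * n) n)) ^ 2 * x ^ n

/-- The function `A(x) = 1 + 3x/(10 + √(4 - 3x))`. -/
noncomputable def Afun (x : ℝ) : ℝ := 1 + 3 * x / (10 + Real.sqrt (4 - 3 * x))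

noncomputable def qc (n : ℕ) : ℝ :=
  ((1 / (2 * (n : ℝ) - 1)) * (1 / 4 ^ n) * (Nat.choose (2 * n) n)) ^ 2

lemma qc_nonneg (n : ℕ) : 0 ≤ qc n := sq_nonneg _

lemma centralBinom_le_four_pow (n : ℕ) : Nat.centralBinom n ≤ 4 ^ n := by
  induction n with
  | zero => simp [Nat.centralBinom]
  | succ n ih =>
    have h := Nat.succ_mul_centralBinom_succ n
    have h2 : (n + 1) * Nat.centralBinom (n + 1) ≤ (n + 1) * (4 * 4 ^ n) := by
      rw [h]
      calc 2 * (2 * n + 1) * Nat.centralBinom n ≤ ((n + 1) * 4) * Nat.centralBinom n :=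
            Nat.mul_le_mul (by omega) le_rfl
        _ = (n + 1) * (4 * Nat.centralBinom n) := by ring
        _ ≤ (n + 1) * (4 * 4 ^ n) := Nat.mul_le_mul le_rfl (Nat.mul_le_mul le_rfl ih)
    have h3 := Nat.le_of_mul_le_mul_left h2 (Nat.succ_pos n)
    calc Nat.centralBinom (n + 1) ≤ 4 * 4 ^ n := h3
      _ = 4 ^ (n + 1) := by ring

lemma choose_le_four (n : ℕ) : (Nat.choose (2 * n) n : ℝ) ≤ 4 ^ n := by
  have h : Nat.choose (2 * n) n ≤ 4 ^ n := by
    rw [← Nat.centralBinom_eq_two_mul_choose]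
    exact centralBinom_le_four_pow n
  exact_mod_cast h

lemma qc_le (n : ℕ) : qc n ≤ 4 / ((n : ℝ) + 1) ^ 2 := by
  rcases Nat.eq_zero_or_pos n with h | h
  · subst h; norm_num [qc]
  · have hn : (1 : ℝ) ≤ n := by exact_mod_cast h
    have h2 : (1 : ℝ) ≤ 2 * (n : ℝ) - 1 := by linarith
    have hch := choose_le_four n
    have hch0 : (0 : ℝ) ≤ (Nat.choose (2 * n) n : ℝ) := by positivity
    have h4 : (0 : ℝ) < 4 ^ n := by positivity
    have hb : (0 : ℝ) ≤ (1 / 4 ^ n : ℝ) * (Nat.choose (2 * n) n) := by positivity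
    have hb1 : (1 / 4 ^ n : ℝ) * (Nat.choose (2 * n) n) ≤ 1 := by
      rw [div_mul_eq_mul_div, one_mul, div_le_one h4]; exact hch
    have hb2 : ((1 / 4 ^ n : ℝ) * (Nat.choose (2 * n) n)) ^ 2 ≤ 1 := by nlinarith
    have hq : qc n ≤ (1 / (2 * (n : ℝ) - 1)) ^ 2 := by
      unfold qc
      have heq : ((1 / (2 * (n : ℝ) - 1)) * (1 / 4 ^ n) * (Nat.choose (2 * n) n)) ^ 2
          = (1 / (2 * (n : ℝ) - 1)) ^ 2 * ((1 / 4 ^ n : ℝ) * (Nat.choose (2 * n) n)) ^ 2 := by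
        ring
      rw [heq]
      nlinarith [sq_nonneg (1 / (2 * (n : ℝ) - 1))]
    have hf : (1 / (2 * (n : ℝ) - 1)) ^ 2 ≤ 4 / ((n : ℝ) + 1) ^ 2 := by
      rw [div_pow, one_pow, div_le_div_iff₀ (by positivity) (by positivity)]
      nlinarith
    linarith

lemma summable_aux : Summable (fun n : ℕ => 4 / ((n : ℝ) + 1) ^ 2) := by
  have h1 : Summable (fun n : ℕ => 1 / ((n : ℝ)) ^ 2) :=
    summable_one_div_nat_pow.mpr one_lt_two
  have h2 := (summable_nat_add_iff 1).mpr h1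
  exact (h2.mul_left 4).congr (fun n => by push_cast; ring)

lemma summable_qc {x : ℝ} (h0 : 0 ≤ x) (h1 : x ≤ 1) (k j : ℕ) :
    Summable (fun n : ℕ => qc (n + k) * x ^ (n + j)) := by
  apply Summable.of_nonneg_of_le
    (fun n => mul_nonneg (qc_nonneg _) (pow_nonneg h0 _)) (fun n => ?_) summable_aux
  calc qc (n + k) * x ^ (n + j) ≤ qc (n + k) * 1 :=
        mul_le_mul_of_nonneg_left (pow_le_one₀ h0 h1) (qc_nonneg _)
    _ = qc (n + k) := mul_one _
    _ ≤ 4 / ((↑(n + k) : ℝ) + 1) ^ 2 := qc_le _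
    _ ≤ 4 / ((n : ℝ) + 1) ^ 2 := by
        have hc : ((n : ℝ) + 1) ^ 2 ≤ ((↑(n + k) : ℝ) + 1) ^ 2 := by
          have : (0:ℝ) ≤ (k:ℝ) := Nat.cast_nonneg k
          push_cast
          nlinarith [Nat.cast_nonneg (α := ℝ) n]
        exact div_le_div_of_nonneg_left (by norm_num) (by positivity) hc


noncomputable def Pb (x : ℝ) : ℝ :=
  1 + x ^ 1 / 4 + x ^ 2 / 64 + x ^ 3 / 256 + 25 * x ^ 4 / 16384 + 49 * x ^ 5 / 65536 + 441 * x ^ 6 / 1048576 + 1089 * x ^ 7 / 4194304 + 184041 * x ^ 8 / 1073741824 + 511225 * x ^ 9 / 4294967296 + 5909761 * x ^ 10 / 68719476736 + 17631601 * x ^ 11 / 274877906944 + 863948449 * x ^ 12 / 17592186044416 + 2704312009 * x ^ 13 / 70368744177664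

lemma sum_qc_eq (x : ℝ) : ∑ n ∈ Finset.range 14, qc n * x ^ n = Pb x := by
  have c1 : Nat.choose 2 1 = 2 := by decide
  have c2 : Nat.choose 4 2 = 6 := by decide
  have c3 : Nat.choose 6 3 = 20 := by decide
  have c4 : Nat.choose 8 4 = 70 := by decide
  have c5 : Nat.choose 10 5 = 252 := by decide
  have c6 : Nat.choose 12 6 = 924 := by decide
  have c7 : Nat.choose 14 7 = 3432 := by decide
  have c8 : Nat.choose 16 8 = 12870 := by decide
  have c9 : Nat.choose 18 9 = 48620 := by decide
  have c10 : Nat.choose 20 10 = 184756 := by decide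
  have c11 : Nat.choose 22 11 = 705432 := by decide
  have c12 : Nat.choose 24 12 = 2704156 := by decide
  have c13 : Nat.choose 26 13 = 10400600 := by decide
  simp only [Finset.sum_range_succ, Finset.sum_range_zero, qc, Pb]
  norm_num [c1, c2, c3, c4, c5, c6, c7, c8, c9, c10, c11, c12, c13]
  ring


noncomputable def Tfun (x : ℝ) : ℝ := ∑' n : ℕ, qc (n + 14) * x ^ (n + 9)

noncomputable def Gfun (x : ℝ) : ℝ := (Pb x - Afun x) / x ^ 5

lemma split {x : ℝ} (hx : x ∈ Set.Ioc (0:ℝ) 1) :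
    (Bfun x - Afun x) / x ^ 5 = Gfun x + Tfun x := by
  obtain ⟨h0, h1⟩ := hx
  have hS : Summable (fun n : ℕ => qc n * x ^ n) := by
    have := summable_qc h0.le h1 0 0
    exact this.congr (fun n => by norm_num)
  have hB : Bfun x = ∑' n : ℕ, qc n * x ^ n := rfl
  have hsplit := Summable.sum_add_tsum_nat_add (f := fun n : ℕ => qc n * x ^ n) 14 hS
  have hx5 : x ^ 5 ≠ 0 := pow_ne_zero _ h0.ne'
  have htail : (∑' n : ℕ, qc (n + 14) * x ^ (n + 14)) / x ^ 5 = Tfun x := by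
    rw [← tsum_div_const]
    unfold Tfun
    congr 1
    funext n
    have : x ^ (n + 14) = x ^ (n + 9) * x ^ 5 := by rw [← pow_add]
    rw [this, mul_comm (x ^ (n+9)) (x^5), ← mul_assoc, mul_comm (qc (n+14)) (x^5), mul_assoc,
      mul_div_assoc]
    field_simp
  rw [hB, ← hsplit, sum_qc_eq]
  unfold Gfun
  rw [← htail]
  ring

lemma T_mono : MonotoneOn Tfun (Set.Ioc (0:ℝ) 1) := by
  intro x hx y hy hxy
  unfold Tfun
  apply Summable.tsum_le_tsum _ (summable_qc hx.1.le hx.2 14 9) (summable_qc hy.1.le hy.2 14 9)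
  intro n
  exact mul_le_mul_of_nonneg_left (pow_le_pow_left₀ hx.1.le hxy _) (qc_nonneg _)

lemma mono_deriv (c d : ℝ) (n : ℕ) (x : ℝ) :
    HasDerivAt (fun y : ℝ => c * y ^ n / d) (c * (n * x ^ (n - 1)) / d) x :=
  ((hasDerivAt_pow n x).const_mul c).div_const d

lemma pow_deriv' (d : ℝ) (n : ℕ) (x : ℝ) :
    HasDerivAt (fun y : ℝ => y ^ n / d) ((n * x ^ (n - 1)) / d) x :=
  (hasDerivAt_pow n x).div_const d

lemma G_strictMono : StrictMonoOn Gfun (Set.Ioc (0:ℝ) 1) := by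
  have hAcont : Continuous Afun := by
    unfold Afun
    refine Continuous.add continuous_const (Continuous.div (by fun_prop) (by fun_prop) ?_)
    intro y
    have h := Real.sqrt_nonneg (4 - 3 * y)
    positivity
  apply strictMonoOn_of_deriv_pos (convex_Ioc 0 1)
  · apply ContinuousOn.div
    · exact ((by unfold Pb; fun_prop : Continuous Pb).sub hAcont).continuousOn
    · fun_prop
    · intro y hy
      exact pow_ne_zero _ (ne_of_gt hy.1)
  · rw [interior_Ioc]
    intro x hx
    obtain ⟨hx0, hx1⟩ := hx
    have h43 : (0:ℝ) < 4 - 3 * x := by linarith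
    have hsqx : Real.sqrt (4 - 3 * x) ^ 2 = 4 - 3 * x := Real.sq_sqrt h43.le
    have hs1 : 1 < Real.sqrt (4 - 3 * x) := by
      have h1 : Real.sqrt 1 < Real.sqrt (4 - 3 * x) := Real.sqrt_lt_sqrt (by norm_num) (by linarith)
      rwa [Real.sqrt_one] at h1
    have hs2 : Real.sqrt (4 - 3 * x) < 2 := by
      have h1 : Real.sqrt (4 - 3 * x) < Real.sqrt 4 := Real.sqrt_lt_sqrt h43.le (by linarith)
      have h2 : Real.sqrt 4 = 2 := by
        rw [show (4:ℝ) = 2 ^ 2 by norm_num, Real.sqrt_sq (by norm_num : (0:ℝ) ≤ 2)]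
      linarith
    have hs0 : 0 < Real.sqrt (4 - 3 * x) := by linarith
    have h10 : (0:ℝ) < 10 + Real.sqrt (4 - 3 * x) := by linarith
    have hPb : HasDerivAt Pb
        ((1 / 4 : ℝ) + x ^ 1 / 32 + 3 * x ^ 2 / 256 + 25 * x ^ 3 / 4096 + 245 * x ^ 4 / 65536 + 1323 * x ^ 5 / 524288 + 7623 * x ^ 6 / 4194304 + 184041 * x ^ 7 / 134217728 + 4601025 * x ^ 8 / 4294967296 + 29548805 * x ^ 9 / 34359738368 + 193947611 * x ^ 10 / 274877906944 + 2591845347 * x ^ 11 / 4398046511104 + 35156056117 * x ^ 12 / 70368744177664) x := by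
      unfold Pb
      have hchain := ((((((((((((((hasDerivAt_const x (1:ℝ)).add (pow_deriv' 4 1 x)).add
        (pow_deriv' 64 2 x)).add (pow_deriv' 256 3 x)).add (mono_deriv 25 16384 4 x)).add
        (mono_deriv 49 65536 5 x)).add (mono_deriv 441 1048576 6 x)).add
        (mono_deriv 1089 4194304 7 x)).add (mono_deriv 184041 1073741824 8 x)).add
        (mono_deriv 511225 4294967296 9 x)).add (mono_deriv 5909761 68719476736 10 x)).add
        (mono_deriv 17631601 274877906944 11 x)).add
        (mono_deriv 863948449 17592186044416 12 x)).add
        (mono_deriv 2704312009 70368744177664 13 x))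
      refine hchain.congr_deriv ?_
      push_cast
      ring
    have hlin : HasDerivAt (fun y : ℝ => 4 - 3 * y) (-3) x := by
      have h := (hasDerivAt_const x (4:ℝ)).sub ((hasDerivAt_id x).const_mul 3)
      refine h.congr_deriv ?_
      norm_num
    have hsq := hlin.sqrt (ne_of_gt h43)
    have hden := (hasDerivAt_const x (10:ℝ)).add hsq
    have hnum3 : HasDerivAt (fun y : ℝ => 3 * y) 3 x := by
      simpa using (hasDerivAt_id x).const_mul (3:ℝ)
    have hAf : HasDerivAt Afun
        ((3 * (10 + Real.sqrt (4 - 3 * x)) + 9 * x / (2 * Real.sqrt (4 - 3 * x))) / (10 + Real.sqrt (4 - 3 * x)) ^ 2) x := by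
      unfold Afun
      have h := (hnum3.div hden (ne_of_gt h10)).const_add (1:ℝ)
      refine h.congr_deriv ?_
      simp only [Pi.add_apply]
      field_simp
      ring
    have hG : HasDerivAt Gfun
        ((((1 / 4 : ℝ) + x ^ 1 / 32 + 3 * x ^ 2 / 256 + 25 * x ^ 3 / 4096 + 245 * x ^ 4 / 65536 + 1323 * x ^ 5 / 524288 + 7623 * x ^ 6 / 4194304 + 184041 * x ^ 7 / 134217728 + 4601025 * x ^ 8 / 4294967296 + 29548805 * x ^ 9 / 34359738368 + 193947611 * x ^ 10 / 274877906944 + 2591845347 * x ^ 11 / 4398046511104 + 35156056117 * x ^ 12 / 70368744177664 -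
           ((3 * (10 + Real.sqrt (4 - 3 * x)) + 9 * x / (2 * Real.sqrt (4 - 3 * x))) / (10 + Real.sqrt (4 - 3 * x)) ^ 2)) * x ^ 5 -
          (Pb x - Afun x) * (5 * x ^ 4)) / (x ^ 5) ^ 2) x := by
      have h := (hPb.sub hAf).div (hasDerivAt_pow 5 x) (pow_ne_zero 5 hx0.ne')
      exact h.congr_deriv (by norm_num)
    rw [hG.deriv]
    apply div_pos _ (by positivity)
    simp only [Pb, Afun]
    set s := Real.sqrt (4 - 3 * x) with hsdef
    have hx4 : x = (4 - s ^ 2) / 3 := by linarith [hsqx]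
    have hu : (0:ℝ) < s - 1 := by linarith
    have hv : (0:ℝ) < 2 - s := by linarith
    have t0 : (0:ℝ) < (1919749655345 / 8796093022208 : ℝ) * ((s - 1) ^ 0 * (2 - s) ^ 29) :=
      mul_pos (by norm_num) (mul_pos (pow_pos hu 0) (pow_pos hv 29))
    have t1 : (0:ℝ) < (8926223157773 / 1649267441664 : ℝ) * ((s - 1) ^ 1 * (2 - s) ^ 28) :=
      mul_pos (by norm_num) (mul_pos (pow_pos hu 1) (pow_pos hv 28))
    have t2 : (0:ℝ) < (553224598007307 / 8796093022208 : ℝ) * ((s - 1) ^ 2 * (2 - s) ^ 27) :=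
      mul_pos (by norm_num) (mul_pos (pow_pos hu 2) (pow_pos hv 27))
    have t3 : (0:ℝ) < (18078684690032939 / 39582418599936 : ℝ) * ((s - 1) ^ 3 * (2 - s) ^ 26) :=
      mul_pos (by norm_num) (mul_pos (pow_pos hu 3) (pow_pos hv 26))
    have t4 : (0:ℝ) < (51889633828833155 / 22265110462464 : ℝ) * ((s - 1) ^ 4 * (2 - s) ^ 25) :=
      mul_pos (by norm_num) (mul_pos (pow_pos hu 4) (pow_pos hv 25))
    have t5 : (0:ℝ) < (198241938736300165 / 22265110462464 : ℝ) * ((s - 1) ^ 5 * (2 - s) ^ 24) :=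
      mul_pos (by norm_num) (mul_pos (pow_pos hu 5) (pow_pos hv 24))
    have t6 : (0:ℝ) < (12289124870153923 / 463856467968 : ℝ) * ((s - 1) ^ 6 * (2 - s) ^ 23) :=
      mul_pos (by norm_num) (mul_pos (pow_pos hu 6) (pow_pos hv 23))
    have t7 : (0:ℝ) < (2056272844149263 / 32614907904 : ℝ) * ((s - 1) ^ 7 * (2 - s) ^ 22) :=
      mul_pos (by norm_num) (mul_pos (pow_pos hu 7) (pow_pos hv 22))
    have t8 : (0:ℝ) < (3544325117426921 / 28991029248 : ℝ) * ((s - 1) ^ 8 * (2 - s) ^ 21) :=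
      mul_pos (by norm_num) (mul_pos (pow_pos hu 8) (pow_pos hv 21))
    have t9 : (0:ℝ) < (153271852636511075 / 782757789696 : ℝ) * ((s - 1) ^ 9 * (2 - s) ^ 20) :=
      mul_pos (by norm_num) (mul_pos (pow_pos hu 9) (pow_pos hv 20))
    have t10 : (0:ℝ) < (8293201144447002175 / 31701690482688 : ℝ) * ((s - 1) ^ 10 * (2 - s) ^ 19) :=
      mul_pos (by norm_num) (mul_pos (pow_pos hu 10) (pow_pos hv 19))
    have t11 : (0:ℝ) < (1551079922355955117 / 5283615080448 : ℝ) * ((s - 1) ^ 11 * (2 - s) ^ 18) :=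
      mul_pos (by norm_num) (mul_pos (pow_pos hu 11) (pow_pos hv 18))
    have t12 : (0:ℝ) < (826014952348782091 / 2972033482752 : ℝ) * ((s - 1) ^ 12 * (2 - s) ^ 17) :=
      mul_pos (by norm_num) (mul_pos (pow_pos hu 12) (pow_pos hv 17))
    have t13 : (0:ℝ) < (5949059363115169609 / 26748301344768 : ℝ) * ((s - 1) ^ 13 * (2 - s) ^ 16) :=
      mul_pos (by norm_num) (mul_pos (pow_pos hu 13) (pow_pos hv 16))
    have t14 : (0:ℝ) < (251293747330060325 / 1671768834048 : ℝ) * ((s - 1) ^ 14 * (2 - s) ^ 15) :=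
      mul_pos (by norm_num) (mul_pos (pow_pos hu 14) (pow_pos hv 15))
    have t15 : (0:ℝ) < (2646085704824305 / 30958682112 : ℝ) * ((s - 1) ^ 15 * (2 - s) ^ 14) :=
      mul_pos (by norm_num) (mul_pos (pow_pos hu 15) (pow_pos hv 14))
    have t16 : (0:ℝ) < (13088722575787 / 322486272 : ℝ) * ((s - 1) ^ 16 * (2 - s) ^ 13) :=
      mul_pos (by norm_num) (mul_pos (pow_pos hu 16) (pow_pos hv 13))
    have t17 : (0:ℝ) < (10260277457903 / 644972544 : ℝ) * ((s - 1) ^ 17 * (2 - s) ^ 12) :=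
      mul_pos (by norm_num) (mul_pos (pow_pos hu 17) (pow_pos hv 12))
    have t18 : (0:ℝ) < (45313024109 / 8957952 : ℝ) * ((s - 1) ^ 18 * (2 - s) ^ 11) :=
      mul_pos (by norm_num) (mul_pos (pow_pos hu 18) (pow_pos hv 11))
    have t19 : (0:ℝ) < (5698722515 / 4478976 : ℝ) * ((s - 1) ^ 19 * (2 - s) ^ 10) :=
      mul_pos (by norm_num) (mul_pos (pow_pos hu 19) (pow_pos hv 10))
    have t20 : (0:ℝ) < (68207585 / 279936 : ℝ) * ((s - 1) ^ 20 * (2 - s) ^ 9) :=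
      mul_pos (by norm_num) (mul_pos (pow_pos hu 20) (pow_pos hv 9))
    have t21 : (0:ℝ) < (19229 / 576 : ℝ) * ((s - 1) ^ 21 * (2 - s) ^ 8) :=
      mul_pos (by norm_num) (mul_pos (pow_pos hu 21) (pow_pos hv 8))
    have t22 : (0:ℝ) < (1889 / 648 : ℝ) * ((s - 1) ^ 22 * (2 - s) ^ 7) :=
      mul_pos (by norm_num) (mul_pos (pow_pos hu 22) (pow_pos hv 7))
    have t23 : (0:ℝ) < (79 / 648 : ℝ) * ((s - 1) ^ 23 * (2 - s) ^ 6) :=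
      mul_pos (by norm_num) (mul_pos (pow_pos hu 23) (pow_pos hv 6))
    have hB : (0:ℝ) <
      (1919749655345 / 8796093022208 : ℝ) * ((s - 1) ^ 0 * (2 - s) ^ 29) +
      (8926223157773 / 1649267441664 : ℝ) * ((s - 1) ^ 1 * (2 - s) ^ 28) +
      (553224598007307 / 8796093022208 : ℝ) * ((s - 1) ^ 2 * (2 - s) ^ 27) +
      (18078684690032939 / 39582418599936 : ℝ) * ((s - 1) ^ 3 * (2 - s) ^ 26) +
      (51889633828833155 / 22265110462464 : ℝ) * ((s - 1) ^ 4 * (2 - s) ^ 25) +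
      (198241938736300165 / 22265110462464 : ℝ) * ((s - 1) ^ 5 * (2 - s) ^ 24) +
      (12289124870153923 / 463856467968 : ℝ) * ((s - 1) ^ 6 * (2 - s) ^ 23) +
      (2056272844149263 / 32614907904 : ℝ) * ((s - 1) ^ 7 * (2 - s) ^ 22) +
      (3544325117426921 / 28991029248 : ℝ) * ((s - 1) ^ 8 * (2 - s) ^ 21) +
      (153271852636511075 / 782757789696 : ℝ) * ((s - 1) ^ 9 * (2 - s) ^ 20) +
      (8293201144447002175 / 31701690482688 : ℝ) * ((s - 1) ^ 10 * (2 - s) ^ 19) +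
      (1551079922355955117 / 5283615080448 : ℝ) * ((s - 1) ^ 11 * (2 - s) ^ 18) +
      (826014952348782091 / 2972033482752 : ℝ) * ((s - 1) ^ 12 * (2 - s) ^ 17) +
      (5949059363115169609 / 26748301344768 : ℝ) * ((s - 1) ^ 13 * (2 - s) ^ 16) +
      (251293747330060325 / 1671768834048 : ℝ) * ((s - 1) ^ 14 * (2 - s) ^ 15) +
      (2646085704824305 / 30958682112 : ℝ) * ((s - 1) ^ 15 * (2 - s) ^ 14) +
      (13088722575787 / 322486272 : ℝ) * ((s - 1) ^ 16 * (2 - s) ^ 13) +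
      (10260277457903 / 644972544 : ℝ) * ((s - 1) ^ 17 * (2 - s) ^ 12) +
      (45313024109 / 8957952 : ℝ) * ((s - 1) ^ 18 * (2 - s) ^ 11) +
      (5698722515 / 4478976 : ℝ) * ((s - 1) ^ 19 * (2 - s) ^ 10) +
      (68207585 / 279936 : ℝ) * ((s - 1) ^ 20 * (2 - s) ^ 9) +
      (19229 / 576 : ℝ) * ((s - 1) ^ 21 * (2 - s) ^ 8) +
      (1889 / 648 : ℝ) * ((s - 1) ^ 22 * (2 - s) ^ 7) +
      (79 / 648 : ℝ) * ((s - 1) ^ 23 * (2 - s) ^ 6) := by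
      linarith [t0, t1, t2, t3, t4, t5, t6, t7, t8, t9, t10, t11, t12, t13, t14, t15, t16, t17, t18, t19, t20, t21, t22, t23]
    have hq4 : (0:ℝ) < ((4 - s ^ 2) / 3) ^ 4 := by
      have h4s : (0:ℝ) < 4 - s ^ 2 := by nlinarith
      positivity
    have h2s : (0:ℝ) < 2 * s * (10 + s) ^ 2 := by
      have hss : (0:ℝ) < s := by linarith
      have h10s : (0:ℝ) < 10 + s := by linarith
      positivity
    have hkey : 2 * s * (10 + s) ^ 2 *
        (((1 / 4 : ℝ) + x ^ 1 / 32 + 3 * x ^ 2 / 256 + 25 * x ^ 3 / 4096 + 245 * x ^ 4 / 65536 + 1323 * x ^ 5 / 524288 + 7623 * x ^ 6 / 4194304 + 184041 * x ^ 7 / 134217728 + 4601025 * x ^ 8 / 4294967296 + 29548805 * x ^ 9 / 34359738368 + 193947611 * x ^ 10 / 274877906944 + 2591845347 * x ^ 11 / 4398046511104 + 35156056117 * x ^ 12 / 70368744177664 -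
          ((3 * (10 + s) + 9 * x / (2 * s)) / (10 + s) ^ 2)) * x ^ 5 -
         (1 + x ^ 1 / 4 + x ^ 2 / 64 + x ^ 3 / 256 + 25 * x ^ 4 / 16384 + 49 * x ^ 5 / 65536 + 441 * x ^ 6 / 1048576 + 1089 * x ^ 7 / 4194304 + 184041 * x ^ 8 / 1073741824 + 511225 * x ^ 9 / 4294967296 + 5909761 * x ^ 10 / 68719476736 + 17631601 * x ^ 11 / 274877906944 + 863948449 * x ^ 12 / 17592186044416 + 2704312009 * x ^ 13 / 70368744177664 -
          (1 + 3 * x / (10 + s))) * (5 * x ^ 4)) =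
        ((4 - s ^ 2) / 3) ^ 4 *
        ((1919749655345 / 8796093022208 : ℝ) * ((s - 1) ^ 0 * (2 - s) ^ 29) +
      (8926223157773 / 1649267441664 : ℝ) * ((s - 1) ^ 1 * (2 - s) ^ 28) +
      (553224598007307 / 8796093022208 : ℝ) * ((s - 1) ^ 2 * (2 - s) ^ 27) +
      (18078684690032939 / 39582418599936 : ℝ) * ((s - 1) ^ 3 * (2 - s) ^ 26) +
      (51889633828833155 / 22265110462464 : ℝ) * ((s - 1) ^ 4 * (2 - s) ^ 25) +
      (198241938736300165 / 22265110462464 : ℝ) * ((s - 1) ^ 5 * (2 - s) ^ 24) +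
      (12289124870153923 / 463856467968 : ℝ) * ((s - 1) ^ 6 * (2 - s) ^ 23) +
      (2056272844149263 / 32614907904 : ℝ) * ((s - 1) ^ 7 * (2 - s) ^ 22) +
      (3544325117426921 / 28991029248 : ℝ) * ((s - 1) ^ 8 * (2 - s) ^ 21) +
      (153271852636511075 / 782757789696 : ℝ) * ((s - 1) ^ 9 * (2 - s) ^ 20) +
      (8293201144447002175 / 31701690482688 : ℝ) * ((s - 1) ^ 10 * (2 - s) ^ 19) +
      (1551079922355955117 / 5283615080448 : ℝ) * ((s - 1) ^ 11 * (2 - s) ^ 18) +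
      (826014952348782091 / 2972033482752 : ℝ) * ((s - 1) ^ 12 * (2 - s) ^ 17) +
      (5949059363115169609 / 26748301344768 : ℝ) * ((s - 1) ^ 13 * (2 - s) ^ 16) +
      (251293747330060325 / 1671768834048 : ℝ) * ((s - 1) ^ 14 * (2 - s) ^ 15) +
      (2646085704824305 / 30958682112 : ℝ) * ((s - 1) ^ 15 * (2 - s) ^ 14) +
      (13088722575787 / 322486272 : ℝ) * ((s - 1) ^ 16 * (2 - s) ^ 13) +
      (10260277457903 / 644972544 : ℝ) * ((s - 1) ^ 17 * (2 - s) ^ 12) +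
      (45313024109 / 8957952 : ℝ) * ((s - 1) ^ 18 * (2 - s) ^ 11) +
      (5698722515 / 4478976 : ℝ) * ((s - 1) ^ 19 * (2 - s) ^ 10) +
      (68207585 / 279936 : ℝ) * ((s - 1) ^ 20 * (2 - s) ^ 9) +
      (19229 / 576 : ℝ) * ((s - 1) ^ 21 * (2 - s) ^ 8) +
      (1889 / 648 : ℝ) * ((s - 1) ^ 22 * (2 - s) ^ 7) +
      (79 / 648 : ℝ) * ((s - 1) ^ 23 * (2 - s) ^ 6)) := by
      rw [hx4]
      have hsne : s ≠ 0 := by linarith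
      have h10ne : (10:ℝ) + s ≠ 0 := by linarith
      field_simp
      ring
    have hR : (0:ℝ) < 2 * s * (10 + s) ^ 2 *
        (((1 / 4 : ℝ) + x ^ 1 / 32 + 3 * x ^ 2 / 256 + 25 * x ^ 3 / 4096 + 245 * x ^ 4 / 65536 + 1323 * x ^ 5 / 524288 + 7623 * x ^ 6 / 4194304 + 184041 * x ^ 7 / 134217728 + 4601025 * x ^ 8 / 4294967296 + 29548805 * x ^ 9 / 34359738368 + 193947611 * x ^ 10 / 274877906944 + 2591845347 * x ^ 11 / 4398046511104 + 35156056117 * x ^ 12 / 70368744177664 -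
          ((3 * (10 + s) + 9 * x / (2 * s)) / (10 + s) ^ 2)) * x ^ 5 -
         (1 + x ^ 1 / 4 + x ^ 2 / 64 + x ^ 3 / 256 + 25 * x ^ 4 / 16384 + 49 * x ^ 5 / 65536 + 441 * x ^ 6 / 1048576 + 1089 * x ^ 7 / 4194304 + 184041 * x ^ 8 / 1073741824 + 511225 * x ^ 9 / 4294967296 + 5909761 * x ^ 10 / 68719476736 + 17631601 * x ^ 11 / 274877906944 + 863948449 * x ^ 12 / 17592186044416 + 2704312009 * x ^ 13 / 70368744177664 -
          (1 + 3 * x / (10 + s))) * (5 * x ^ 4)) := by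
      rw [hkey]
      exact mul_pos hq4 hB
    by_contra hc
    push_neg at hc
    have hcontr := mul_nonpos_iff.mpr (Or.inl ⟨h2s.le, hc⟩)
    linarith [hR, hcontr]

theorem theta_strictMonoOn :
    StrictMonoOn (fun x : ℝ => (Bfun x - Afun x) / x ^ 5) (Set.Ioc 0 1) := by
  intro x hx y hy hxy
  simp only
  rw [split hx, split hy]
  exact add_lt_add_of_lt_of_le (G_strictMono hx hy hxy) (T_mono hx hy hxy.le)
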